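/- (Fu–Lascoux identity) For all positive integers n, m, real or formal x, and q with denominators nonzero: the sum over chains n ≥ i_1 ≥ ... ≥ i_m ≥ 1 of (-1)^{i_m - 1}(x^{i_m} - (-1)^{i_m}) ∏_{j=1}^m q^{i_j}/(1 - q^{i_j}) equals the sum over r from 1 to n of [n choose r]_q · (-1)^{r-1} x^r (-x^{-1}; q)_r q^{m r} / (1 - q^r)^m. -/

import Mathlib

noncomputable def qPoch (q a : ℝ) (n : ℕ) : ℝ := ∏ j ∈ Finset.range n, (1 - a * q ^ j)

noncomputable def qBinom (q : ℝ) (n r : ℕ) : ℝ :=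
  if r ≤ n then qPoch q q n / (qPoch q q r * qPoch q q (n - r)) else 0

/-- Multiple sum over chains `top ≥ i₁ ≥ ⋯ ≥ i_m ≥ 1` of
`(-1)^{i_m-1}(x^{i_m} - (-1)^{i_m}) ∏ q^{i_j}/(1-q^{i_j})`. -/
noncomputable def flSum (q x : ℝ) : ℕ → ℕ → ℝ
  | 0, top => (-1) ^ (top - 1) * (x ^ top - (-1 : ℝ) ^ top)
  | m + 1, top => ∑ i ∈ Finset.Icc 1 top, q ^ i / (1 - q ^ i) * flSum q x m i

section Aux

variable {q x : ℝ}

lemma qPoch_succ (a : ℝ) (k : ℕ) : qPoch q a (k+1) = qPoch q a k * (1 - a * q ^ k) := by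
  simp [qPoch, Finset.prod_range_succ]

lemma qPoch_zero (a : ℝ) : qPoch q a 0 = 1 := by simp [qPoch]

lemma qPoch_ne (hden : ∀ i : ℕ, 1 ≤ i → 1 - q ^ i ≠ 0) (k : ℕ) : qPoch q q k ≠ 0 := by
  rw [qPoch, Finset.prod_ne_zero_iff]
  intro j _
  have := hden (j+1) (by omega)
  rw [pow_succ'] at this
  exact this

lemma qBinom_zero (hden : ∀ i : ℕ, 1 ≤ i → 1 - q ^ i ≠ 0) (n : ℕ) : qBinom q n 0 = 1 := by
  simp [qBinom, qPoch_zero, div_self (qPoch_ne hden n)]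

lemma qBinom_self (hden : ∀ i : ℕ, 1 ≤ i → 1 - q ^ i ≠ 0) (n : ℕ) : qBinom q n n = 1 := by
  simp [qBinom, qPoch_zero, div_self (qPoch_ne hden n)]

lemma qBinom_eq_zero {n r : ℕ} (h : n < r) : qBinom q n r = 0 := by
  simp [qBinom, Nat.not_le.mpr h]

lemma qBinom_ratio (hden : ∀ i : ℕ, 1 ≤ i → 1 - q ^ i ≠ 0) {n r : ℕ} (h : r ≤ n) :
    qBinom q (n+1) r * (1 - q ^ (n+1-r)) = qBinom q n r * (1 - q ^ (n+1)) := by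
  have h1 : n + 1 - r = (n - r) + 1 := by omega
  rw [qBinom, qBinom, if_pos h, if_pos (by omega : r ≤ n + 1), h1, qPoch_succ, qPoch_succ]
  have e1 : q * q ^ (n - r) = q ^ (n - r + 1) := by rw [pow_succ']
  have e2 : q * q ^ n = q ^ (n + 1) := by rw [pow_succ']
  rw [e1, e2]
  have n1 := qPoch_ne hden n
  have n2 := qPoch_ne hden r
  have n3 := qPoch_ne hden (n - r)
  have n4 : (1 : ℝ) - q ^ (n - r + 1) ≠ 0 := hden _ (by omega)
  field_simp

lemma qBinom_pascal (hden : ∀ i : ℕ, 1 ≤ i → 1 - q ^ i ≠ 0) (n s : ℕ) :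
    qBinom q (n+1) (s+1) = q ^ (s+1) * qBinom q n (s+1) + qBinom q n s := by
  rcases le_or_gt (s+1) n with h | h
  · have h2 : n - s = (n - (s+1)) + 1 := by omega
    have h3 : n + 1 - (s + 1) = n - s := by omega
    rw [qBinom, qBinom, qBinom, if_pos (by omega : s + 1 ≤ n + 1), if_pos h,
      if_pos (by omega : s ≤ n), h3, h2, qPoch_succ, qPoch_succ, qPoch_succ]
    have e1 : q * q ^ (n - (s+1)) = q ^ (n - (s+1) + 1) := by rw [pow_succ']
    have e2 : q * q ^ n = q ^ (n + 1) := by rw [pow_succ']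
    have e3 : q * q ^ s = q ^ (s + 1) := by rw [pow_succ']
    rw [e1, e2, e3]
    have n1 := qPoch_ne hden n
    have n2 := qPoch_ne hden s
    have n3 := qPoch_ne hden (n - (s+1))
    have n4 : (1 : ℝ) - q ^ (n - (s+1) + 1) ≠ 0 := hden _ (by omega)
    have n5 : (1 : ℝ) - q ^ (s + 1) ≠ 0 := hden _ (by omega)
    have hab : q ^ (s+1) * q ^ (n - (s+1) + 1) = q ^ (n+1) := by
      rw [← pow_add]; congr 1; omega
    generalize hP : qPoch q q n = P at *
    generalize hQ : qPoch q q s = Q at *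
    generalize hR : qPoch q q (n - (s+1)) = R at *
    generalize hA : q ^ (s+1) = A at *
    generalize hB : q ^ (n - (s+1) + 1) = B at *
    generalize hC : q ^ (n+1) = C at *
    field_simp
    linear_combination hab
  · rcases Nat.eq_or_lt_of_le (by omega : n ≤ s) with rfl | h'
    · have z : qBinom q n (n+1) = 0 := by simp [qBinom]
      have o1 : qBinom q (n+1) (n+1) = 1 := by
        simp [qBinom, qPoch_zero, div_self (qPoch_ne hden (n+1))]
      have o2 : qBinom q n n = 1 := by
        simp [qBinom, qPoch_zero, div_self (qPoch_ne hden n)]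
      rw [z, o1, o2]; ring
    · have z1 : qBinom q (n+1) (s+1) = 0 := by simp [qBinom]; omega
      have z2 : qBinom q n (s+1) = 0 := by simp [qBinom]; omega
      have z3 : qBinom q n s = 0 := by simp [qBinom]; omega
      rw [z1, z2, z3]; ring

lemma key_sum (hden : ∀ i : ℕ, 1 ≤ i → 1 - q ^ i ≠ 0) {r n : ℕ} (hr : 1 ≤ r) (hrn : r ≤ n) :
    ∑ i ∈ Finset.Icc 1 n, qBinom q i r * (q ^ i / (1 - q ^ i))
      = qBinom q n r * (q ^ r / (1 - q ^ r)) := by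
  induction n, hrn using Nat.le_induction with
  | base =>
    obtain ⟨t, rfl⟩ : ∃ t, r = t + 1 := ⟨r - 1, by omega⟩
    rw [Finset.sum_Icc_succ_top (by omega)]
    have : ∑ i ∈ Finset.Icc 1 t, qBinom q i (t+1) * (q ^ i / (1 - q ^ i)) = 0 := by
      apply Finset.sum_eq_zero
      intro i hi
      rw [qBinom_eq_zero (by simp at hi; omega)]
      ring
    rw [this, qBinom_self hden]
    ring
  | succ n hn ih =>
    rw [Finset.sum_Icc_succ_top (by omega), ih]
    have h6 := qBinom_ratio hden hn
    have hab : q ^ (n+1) = q ^ r * q ^ (n + 1 - r) := by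
      rw [← pow_add]; congr 1; omega
    have u1 : (1:ℝ) - q ^ r ≠ 0 := hden _ hr
    have u2 : (1:ℝ) - q ^ (n+1) ≠ 0 := hden _ (by omega)
    rw [hab] at h6 u2 ⊢
    generalize hBn : qBinom q n r = β at *
    generalize hBn1 : qBinom q (n+1) r = γ at *
    generalize hA : q ^ r = a at *
    generalize hB : q ^ (n+1-r) = b at *
    field_simp
    linear_combination (-a) * h6

lemma sumU (hden : ∀ i : ℕ, 1 ≤ i → 1 - q ^ i ≠ 0) (n : ℕ) :
    ∑ r ∈ Finset.range (n+1), (-1:ℝ)^r * qBinom q n r * ∏ j ∈ Finset.range r, (x + q^j)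
      = (-x)^n := by
  induction n with
  | zero => simp [qBinom_self hden]
  | succ n ih =>
    rw [Finset.sum_range_succ']
    have hsplit : ∀ i ∈ Finset.range (n+1),
        (-1:ℝ)^(i+1) * qBinom q (n+1) (i+1) * ∏ j ∈ Finset.range (i+1), (x + q^j)
        = ((-1:ℝ)^(i+1) * q^(i+1) * qBinom q n (i+1) * ∏ j ∈ Finset.range (i+1), (x + q^j))
          + (- x * ((-1:ℝ)^i * qBinom q n i * ∏ j ∈ Finset.range i, (x + q^j))
             - ((-1:ℝ)^i * q^i * qBinom q n i * ∏ j ∈ Finset.range i, (x + q^j))) := by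
      intro i _
      rw [qBinom_pascal hden, Finset.prod_range_succ]
      ring
    rw [Finset.sum_congr rfl hsplit, Finset.sum_add_distrib, Finset.sum_sub_distrib,
      ← Finset.mul_sum]
    have e3 : ∑ i ∈ Finset.range (n+1),
        ((-1:ℝ)^(i+1) * q^(i+1) * qBinom q n (i+1) * ∏ j ∈ Finset.range (i+1), (x + q^j))
        = (∑ i ∈ Finset.range (n+1),
            (-1:ℝ)^i * q^i * qBinom q n i * ∏ j ∈ Finset.range i, (x + q^j)) - 1 := by
      have h1 := Finset.sum_range_succ'
        (fun i => (-1:ℝ)^i * q^i * qBinom q n i * ∏ j ∈ Finset.range i, (x + q^j)) (n+1)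
      have h2 := Finset.sum_range_succ
        (fun i => (-1:ℝ)^i * q^i * qBinom q n i * ∏ j ∈ Finset.range i, (x + q^j)) (n+1)
      rw [h2] at h1
      simp only [qBinom_eq_zero (show n < n + 1 by omega), qBinom_zero hden] at h1
      simp only [pow_zero, one_mul, mul_one, mul_zero, zero_mul, Finset.prod_range_zero,
        add_zero] at h1
      linarith [h1]
    rw [e3, ih]
    simp only [qBinom_zero hden, pow_zero, one_mul, mul_one, Finset.prod_range_zero]
    ring

lemma main_aux (hden : ∀ i : ℕ, 1 ≤ i → 1 - q ^ i ≠ 0) :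
    ∀ (m n : ℕ), 1 ≤ n → flSum q x m n
      = ∑ r ∈ Finset.Icc 1 n, qBinom q n r *
          ((-1:ℝ)^(r-1) * (∏ j ∈ Finset.range r, (x + q^j)) * (q^r / (1 - q^r))^m) := by
  intro m
  induction m with
  | zero =>
    intro n hn
    obtain ⟨k, rfl⟩ : ∃ k, n = k + 1 := ⟨n-1, by omega⟩
    have hU := sumU (x := x) hden (k+1)
    have hins : Finset.range (k+2) = insert 0 (Finset.Icc 1 (k+1)) := by
      ext i; simp; omega
    rw [hins, Finset.sum_insert (by simp)] at hU
    simp only [pow_zero, one_mul, Finset.prod_range_zero, mul_one, qBinom_zero hden] at hU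
    have hcong : ∀ r ∈ Finset.Icc 1 (k+1),
        qBinom q (k+1) r * ((-1:ℝ)^(r-1) * (∏ j ∈ Finset.range r, (x + q^j)) * (q^r/(1-q^r))^0)
        = -((-1:ℝ)^r * qBinom q (k+1) r * ∏ j ∈ Finset.range r, (x + q^j)) := by
      intro r hr
      simp only [Finset.mem_Icc] at hr
      obtain ⟨s, rfl⟩ : ∃ s, r = s + 1 := ⟨r-1, by omega⟩
      simp only [Nat.add_sub_cancel, pow_zero, mul_one, pow_succ]
      ring
    rw [show flSum q x 0 (k+1) = (-1:ℝ)^(k+1-1) * (x^(k+1) - (-1:ℝ)^(k+1)) from rfl]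
    rw [Finset.sum_congr rfl hcong, Finset.sum_neg_distrib]
    have hsum : ∑ r ∈ Finset.Icc 1 (k+1),
        (-1:ℝ)^r * qBinom q (k+1) r * ∏ j ∈ Finset.range r, (x + q^j) = (-x)^(k+1) - 1 := by
      linarith [hU]
    rw [hsum]
    have h2 : ((-1:ℝ))^k * (-1)^k = 1 := by
      rw [← pow_add]; exact Even.neg_one_pow ⟨k, rfl⟩
    simp only [Nat.add_sub_cancel]
    linear_combination h2
  | succ m ih =>
    intro n hn
    rw [show flSum q x (m+1) n
        = ∑ i ∈ Finset.Icc 1 n, q ^ i / (1 - q ^ i) * flSum q x m i from rfl]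
    calc ∑ i ∈ Finset.Icc 1 n, q ^ i / (1 - q ^ i) * flSum q x m i
        = ∑ i ∈ Finset.Icc 1 n, ∑ r ∈ Finset.Icc 1 n, q ^ i / (1 - q ^ i) *
            (qBinom q i r * ((-1:ℝ)^(r-1) * (∏ j ∈ Finset.range r, (x + q^j)) *
              (q^r / (1 - q^r))^m)) := by
          refine Finset.sum_congr rfl fun i hi => ?_
          simp only [Finset.mem_Icc] at hi
          rw [ih i hi.1, Finset.mul_sum (Finset.Icc 1 i)
            (fun r => qBinom q i r * ((-1:ℝ)^(r-1) * (∏ j ∈ Finset.range r, (x + q^j)) *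
              (q^r / (1 - q^r))^m)) (q ^ i / (1 - q ^ i))]
          refine Finset.sum_subset
            (show Finset.Icc 1 i ⊆ Finset.Icc 1 n from Finset.Icc_subset_Icc_right hi.2)
            (fun r hr hr' => ?_)
          simp only [Finset.mem_Icc] at hr hr'
          rw [qBinom_eq_zero (show i < r by omega)]
          ring
      _ = ∑ r ∈ Finset.Icc 1 n, ((-1:ℝ)^(r-1) * (∏ j ∈ Finset.range r, (x + q^j)) *
            (q^r / (1 - q^r))^m) * ∑ i ∈ Finset.Icc 1 n, qBinom q i r * (q ^ i / (1 - q ^ i)) := by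
          rw [Finset.sum_comm]
          refine Finset.sum_congr rfl fun r _ => ?_
          rw [Finset.mul_sum]
          refine Finset.sum_congr rfl fun i _ => ?_
          ring
      _ = ∑ r ∈ Finset.Icc 1 n, qBinom q n r *
            ((-1:ℝ)^(r-1) * (∏ j ∈ Finset.range r, (x + q^j)) * (q^r / (1 - q^r))^(m+1)) := by
          refine Finset.sum_congr rfl fun r hr => ?_
          simp only [Finset.mem_Icc] at hr
          rw [key_sum hden hr.1 hr.2, pow_succ]
          ring

end Aux

/-- The Fu–Lascoux identity. -/
theorem fu_lascoux (q x : ℝ) (n m : ℕ) (hn : 0 < n) (hm : 0 < m) (hx : x ≠ 0)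
    (hden : ∀ i : ℕ, 1 ≤ i → 1 - q ^ i ≠ 0) :
    flSum q x m n =
      ∑ r ∈ Finset.Icc 1 n,
        qBinom q n r * ((-1) ^ (r - 1) * x ^ r * qPoch q (-x⁻¹) r * q ^ (m * r) /
          (1 - q ^ r) ^ m) := by
  rw [main_aux hden m n hn]
  refine Finset.sum_congr rfl fun r hr => ?_
  have hP : (∏ j ∈ Finset.range r, (x + q^j)) = x^r * qPoch q (-x⁻¹) r := by
    rw [qPoch, show x^r = ∏ _j ∈ Finset.range r, x from by simp, ← Finset.prod_mul_distrib]
    refine Finset.prod_congr rfl fun j _ => ?_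
    field_simp
    ring
  rw [hP, div_pow, ← pow_mul, Nat.mul_comm r m]
  ring
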